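/- arXiv:1508.02069 — 2 statements merged into one kernel-verified Lean document; each statement's English description precedes it below -/
import Mathlib

section
/- Let 0 < m ≤ n and let S ⊆ Δⁿ be the union of m of the codimension-one faces ∂ⱼΔⁿ of the n-simplex Δⁿ. Then the inclusion S ↪ Δⁿ is an m-expansion. -/
open CategoryTheory CategoryTheory.Limits Opposite

universe v u

namespace Paper

/-- Auxiliary inductive for `m`-expansions: `ExpansionAux m n₀ i` witnesses a
finite filtration exhibiting `i` as a composite of pushouts of horn
inclusions `Λ[n,j] ↪ Δ[n]` with `m ≤ n`, the dimensions `n` being weakly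
monotone and bounded below by `n₀`. -/
inductive ExpansionAux (m : ℕ) : ℕ → ∀ {S T : SSet.{v}}, (S ⟶ T) → Prop where
  | of_iso {S T : SSet.{v}} (n₀ : ℕ) (i : S ⟶ T) (h : IsIso i) : ExpansionAux m n₀ i
  | step {S T U : SSet.{v}} (n₀ n : ℕ) (hmn : m ≤ n) (h₀ : n₀ ≤ n) (j : Fin (n + 1))
      (y : (SSet.horn (n : ℕ) j : SSet.{v}) ⟶ S) (i : S ⟶ T) (x : SSet.stdSimplex.obj (SimplexCategory.mk n) ⟶ T)
      (hpo : IsPushout y (SSet.horn n j).ι i x)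
      {rest : T ⟶ U} (hrest : ExpansionAux m n rest) :
      ExpansionAux m n₀ (i ≫ rest)

open Simplicial

/-- `i : S ⟶ T` is an `m`-expansion: it is a finite composite of pushouts of
horn inclusions `Λ[n,j] ↪ Δ[n]` with `n ≥ m`, attached in order of weakly
monotone dimension. -/
def IsExpansion (m : ℕ) {S T : SSet.{v}} (i : S ⟶ T) : Prop :=
  ExpansionAux m 0 i
/-- The union of the faces `∂ⱼΔⁿ`, `j ∈ J`, of the standard `n`-simplex: the
simplicial subset of `Δ[n]` consisting of those simplices missing some vertex
`j ∈ J`. -/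
def unionOfFaces (n : ℕ) (J : Finset (Fin (n + 1))) : SSet.{v} where
  obj m := { σ : Δ[n].obj m // ∃ j ∈ J, ∀ a, σ.down.toOrderHom a ≠ j }
  map {m m'} α := TypeCat.ofHom fun σ => ⟨Δ[n].map α σ.1, by
    obtain ⟨j, hj, h⟩ := σ.2
    exact ⟨j, hj, fun a => h (α.unop.toOrderHom a)⟩⟩

/-- The inclusion of the union of faces into the standard simplex. -/
def unionOfFacesIncl (n : ℕ) (J : Finset (Fin (n + 1))) :
    unionOfFaces.{v} n J ⟶ Δ[n] where
  app m := TypeCat.ofHom fun σ => σ.1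


open Function in
open scoped Classical in
lemma types_isPushout {A B X Y : Type v} (f : A ⟶ X) (g : A ⟶ B) (h : X ⟶ Y) (i : B ⟶ Y)
    (comm : ∀ a, h (f a) = i (g a)) (hh : Injective h) (hi : Injective i)
    (hrange : ∀ b, (∃ x, h x = i b) → ∃ a, g a = b)
    (surj : ∀ y, (∃ x, h x = y) ∨ (∃ b, i b = y)) :
    IsPushout f g h i := by
  have weq : f ≫ h = g ≫ i := by ext a; exact comm a
  apply IsPushout.of_isColimit' ⟨weq⟩
  apply PushoutCocone.IsColimit.mk weq
    (fun s => TypeCat.ofHom fun y => if hy : ∃ x, h x = y then s.inl hy.choose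
      else s.inr (((surj y).resolve_left hy).choose))
  · intro s
    ext x
    have hy : ∃ x', h x' = h x := ⟨x, rfl⟩
    simp only [TypeCat.Fun.toFun_apply, types_comp_apply, TypeCat.ofHom_apply, dif_pos hy]
    rw [hh hy.choose_spec]
  · intro s
    ext b
    by_cases hy : ∃ x, h x = i b
    · simp only [TypeCat.Fun.toFun_apply, types_comp_apply, TypeCat.ofHom_apply, dif_pos hy]
      obtain ⟨a, rfl⟩ := hrange b hy
      have hx : hy.choose = f a := hh (hy.choose_spec.trans (comm a).symm)
      rw [hx]
      exact types_congr_hom s.condition a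
    · simp only [TypeCat.Fun.toFun_apply, types_comp_apply, TypeCat.ofHom_apply, dif_neg hy]
      exact congrArg s.inr (hi ((surj (i b)).resolve_left hy).choose_spec)
  · intro s m hl hr
    ext y
    by_cases hy : ∃ x, h x = y
    · simp only [TypeCat.Fun.toFun_apply, TypeCat.ofHom_apply, dif_pos hy]
      conv_lhs => rw [← hy.choose_spec]
      exact types_congr_hom hl _
    · simp only [TypeCat.Fun.toFun_apply, TypeCat.ofHom_apply, dif_neg hy]
      conv_lhs => rw [← ((surj y).resolve_left hy).choose_spec]
      exact types_congr_hom hr _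

lemma isPushout_of_app {Z X Y P : SSet.{v}} {f : Z ⟶ X} {g : Z ⟶ Y} {inl : X ⟶ P} {inr : Y ⟶ P}
    (w : f ≫ inl = g ≫ inr)
    (H : ∀ q, IsPushout (f.app q) (g.app q) (inl.app q) (inr.app q)) :
    IsPushout f g inl inr := by
  refine ⟨⟨w⟩, ⟨evaluationJointlyReflectsColimits _ fun q => ?_⟩⟩
  refine (IsColimit.equivOfNatIsoOfIso (spanCompIso ((evaluation _ _).obj q) f g) _ _
      (WalkingSpan.ext ?_ ?_ ?_)).symm (H q).isColimit
  exacts [Iso.refl _, (Category.comp_id _).trans (Category.id_comp _),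
    (Category.comp_id _).trans (Category.id_comp _)]

namespace Expand

variable (n : ℕ) (J : Finset (Fin (n + 1))) (k : Fin (n + 1))

/-- The stage of the filtration corresponding to a family `G` of subsets of the
complement of `insert k J`. -/
def stage (G : Finset (Finset (Fin (n + 1)))) : SSet.{v} where
  obj q := { σ : Δ[n].obj q // (∃ j ∈ J, ∀ a, σ.down.toOrderHom a ≠ j) ∨
      ∃ B ∈ G, ∀ a, σ.down.toOrderHom a ∈ insert k (J ∪ B) }
  map {q q'} α := TypeCat.ofHom fun σ => ⟨Δ[n].map α σ.1, by
    obtain ⟨j, hj, h⟩ | ⟨B, hB, h⟩ := σ.2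
    · exact Or.inl ⟨j, hj, fun a => h (α.unop.toOrderHom a)⟩
    · exact Or.inr ⟨B, hB, fun a => h (α.unop.toOrderHom a)⟩⟩

/-- Projection of a stage to the standard simplex. -/
def proj (G : Finset (Finset (Fin (n + 1)))) : stage.{v} n J k G ⟶ Δ[n] where
  app q := TypeCat.ofHom fun σ => σ.1

/-- Inclusion of stages. -/
def stageIncl (G G' : Finset (Finset (Fin (n + 1)))) (h : G ⊆ G') :
    stage.{v} n J k G ⟶ stage.{v} n J k G' where
  app q := TypeCat.ofHom fun σ => ⟨σ.1, by
    obtain ⟨j, hj, h'⟩ | ⟨B, hB, h'⟩ := σ.2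
    · exact Or.inl ⟨j, hj, h'⟩
    · exact Or.inr ⟨B, h hB, h'⟩⟩

variable (b : Finset (Fin (n + 1))) {p : ℕ} (hcard : (insert k (J ∪ b)).card = p + 1)

/-- The order isomorphism enumerating `insert k (J ∪ b)`. -/
def eIso : Fin (p + 1) ≃o {x // x ∈ insert k (J ∪ b)} :=
  (insert k (J ∪ b)).orderIsoOfFin hcard

/-- The corresponding monotone injection `Fin (p+1) → Fin (n+1)`. -/
def emap : Fin (p + 1) →o Fin (n + 1) where
  toFun t := (eIso n J k b hcard t : Fin (n + 1))
  monotone' := fun s t hst => Subtype.coe_le_coe.2 ((eIso n J k b hcard).monotone hst)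

lemma emap_injective : Function.Injective (emap n J k b hcard) :=
  fun s t hst => (eIso n J k b hcard).injective (Subtype.ext hst)

lemma emap_mem (t : Fin (p + 1)) : emap n J k b hcard t ∈ insert k (J ∪ b) :=
  (eIso n J k b hcard t).2

/-- The index of `k` in the enumeration. -/
def jdx : Fin (p + 1) := (eIso n J k b hcard).symm ⟨k, Finset.mem_insert_self _ _⟩

lemma emap_jdx : emap n J k b hcard (jdx n J k b hcard) = k :=
  congrArg Subtype.val ((eIso n J k b hcard).apply_symm_apply ⟨k, Finset.mem_insert_self _ _⟩)

variable (G : Finset (Finset (Fin (n + 1))))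

/-- The attaching simplex `Δ[p] ⟶ stage (insert b G)`. -/
def xmap : Δ[p] ⟶ stage.{v} n J k (insert b G) where
  app q := TypeCat.ofHom fun τ => ⟨SSet.stdSimplex.objMk ((emap n J k b hcard).comp τ.down.toOrderHom),
    Or.inr ⟨b, Finset.mem_insert_self _ _, fun a => emap_mem n J k b hcard _⟩⟩

/-- The attaching map of the horn, `Λ[p, jdx] ⟶ stage G`. -/
def ymap (hfaces : ∀ c ∈ b, b \ {c} ∈ G) :
    (SSet.horn p (jdx n J k b hcard) : SSet.{v}) ⟶ stage.{v} n J k G where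
  app q := TypeCat.ofHom fun τ => ⟨SSet.stdSimplex.objMk ((emap n J k b hcard).comp τ.1.down.toOrderHom), by
    obtain ⟨t, ht⟩ := Set.ne_univ_iff_exists_notMem _ |>.1 ((SSet.mem_horn_iff _ _).1 τ.2)
    rw [Set.mem_union] at ht
    push_neg at ht
    obtain ⟨ht1, ht2⟩ := ht
    rw [Set.mem_singleton_iff] at ht2
    have hmem := emap_mem n J k b hcard t
    rcases Finset.mem_insert.1 hmem with hck | hcJb
    · exact absurd (emap_injective n J k b hcard
        (hck.trans (emap_jdx n J k b hcard).symm)) ht2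
    rcases Finset.mem_union.1 hcJb with hcJ | hcb
    · exact Or.inl ⟨emap n J k b hcard t, hcJ,
        fun a hEq => ht1 ⟨a, emap_injective n J k b hcard hEq⟩⟩
    · refine Or.inr ⟨b \ {emap n J k b hcard t}, hfaces _ hcb, fun a => ?_⟩
      have h2 := emap_mem n J k b hcard (τ.1.down.toOrderHom a)
      rcases Finset.mem_insert.1 h2 with h3 | h3
      · exact Finset.mem_insert.2 (Or.inl h3)
      rcases Finset.mem_union.1 h3 with h4 | h4
      · exact Finset.mem_insert_of_mem (Finset.mem_union_left _ h4)
      · refine Finset.mem_insert_of_mem (Finset.mem_union_right _ (Finset.mem_sdiff.2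
          ⟨h4, fun h5 => ht1 ⟨a, emap_injective n J k b hcard
            (Finset.mem_singleton.1 h5)⟩⟩))⟩

lemma simplex_ext {N : ℕ} {q : SimplexCategoryᵒᵖ} {x y : Δ[N].obj q}
    (h : ∀ a, x.down.toOrderHom a = y.down.toOrderHom a) : x = y :=
  congrArg ULift.up (SimplexCategory.Hom.ext _ _ (OrderHom.ext _ _ (funext h))) |>.trans rfl |>.symm.trans rfl |>.symm

lemma isPushout_step (hkJ : k ∉ J) (hbG : b ∉ G) (hbD : ∀ c ∈ b, c ∉ insert k J)
    (hdc : ∀ B ∈ G, ∀ B' ⊆ B, B' ∈ G) (hfaces : ∀ c ∈ b, b \ {c} ∈ G) :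
    IsPushout (ymap.{v} n J k b hcard G hfaces) (SSet.horn p (jdx n J k b hcard)).ι
      (stageIncl.{v} n J k G (insert b G) (Finset.subset_insert _ _))
      (xmap.{v} n J k b hcard G) := by
  apply isPushout_of_app
  · ext q τ
    exact Subtype.ext rfl
  · intro q
    apply types_isPushout
    · intro a
      exact Subtype.ext rfl
    · intro σ₁ σ₂ hEq
      have h0 := congrArg Subtype.val hEq
      exact Subtype.ext h0
    · intro τ₁ τ₂ hEq
      have h1 : ∀ a, emap n J k b hcard (τ₁.down.toOrderHom a)
          = emap n J k b hcard (τ₂.down.toOrderHom a) :=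
        fun a => congrArg (fun z : Δ[n].obj q => z.down.toOrderHom a)
          (congrArg Subtype.val hEq)
      exact simplex_ext fun a => emap_injective n J k b hcard (h1 a)
    · rintro τ ⟨ρ, hρ⟩
      have hval : ρ.1 = SSet.stdSimplex.objMk
          ((emap n J k b hcard).comp τ.down.toOrderHom) := congrArg Subtype.val hρ
      refine ⟨⟨τ, ?_⟩, rfl⟩
      refine (SSet.mem_horn_iff _ _).2 ?_
      intro huniv
      have pf := ρ.2
      rw [hval] at pf
      rcases pf with ⟨j₀, hj₀, hmiss⟩ | ⟨B', hB', hsub⟩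
      · have hjk : j₀ ∈ insert k (J ∪ b) :=
          Finset.mem_insert_of_mem (Finset.mem_union_left _ hj₀)
        have het : emap n J k b hcard ((eIso n J k b hcard).symm ⟨j₀, hjk⟩) = j₀ :=
          congrArg Subtype.val ((eIso n J k b hcard).apply_symm_apply ⟨j₀, hjk⟩)
        have ht2 : (eIso n J k b hcard).symm ⟨j₀, hjk⟩ ≠ jdx n J k b hcard := by
          intro h
          rw [h, emap_jdx] at het
          exact hkJ (het ▸ hj₀)
        have hmem : (eIso n J k b hcard).symm ⟨j₀, hjk⟩ ∈
            Set.range (SSet.stdSimplex.asOrderHom τ) ∪ {jdx n J k b hcard} := huniv ▸ Set.mem_univ _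
        rcases hmem with ⟨a, ha⟩ | hmem
        · exact hmiss a (by
            show emap n J k b hcard (τ.down.toOrderHom a) = j₀
            rw [show τ.down.toOrderHom a = _ from ha, het])
        · exact ht2 hmem
      · have hnb : ¬ b ⊆ B' := fun hss => hbG (hdc B' hB' b hss)
        obtain ⟨c, hcb, hcB'⟩ := Finset.not_subset.1 hnb
        have hck : c ∈ insert k (J ∪ b) :=
          Finset.mem_insert_of_mem (Finset.mem_union_right _ hcb)
        have hckJ := hbD c hcb
        have het : emap n J k b hcard ((eIso n J k b hcard).symm ⟨c, hck⟩) = c :=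
          congrArg Subtype.val ((eIso n J k b hcard).apply_symm_apply ⟨c, hck⟩)
        have ht2 : (eIso n J k b hcard).symm ⟨c, hck⟩ ≠ jdx n J k b hcard := by
          intro h
          rw [h, emap_jdx] at het
          exact hckJ (het ▸ Finset.mem_insert_self _ _)
        have hmem : (eIso n J k b hcard).symm ⟨c, hck⟩ ∈
            Set.range (SSet.stdSimplex.asOrderHom τ) ∪ {jdx n J k b hcard} := huniv ▸ Set.mem_univ _
        rcases hmem with ⟨a, ha⟩ | hmem
        · have h5 : emap n J k b hcard (τ.down.toOrderHom a) = c := by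
            rw [show τ.down.toOrderHom a = _ from ha, het]
          have h6 : emap n J k b hcard (τ.down.toOrderHom a) ∈ insert k (J ∪ B') := hsub a
          rw [h5] at h6
          rcases Finset.mem_insert.1 h6 with h7 | h7
          · exact hckJ (h7 ▸ Finset.mem_insert_self _ _)
          rcases Finset.mem_union.1 h7 with h8 | h8
          · exact hckJ (Finset.mem_insert_of_mem h8)
          · exact hcB' h8
        · exact ht2 hmem
    · rintro ⟨σ, hσ | ⟨B', hB', hsub⟩⟩
      · exact Or.inl ⟨⟨σ, Or.inl hσ⟩, rfl⟩
      rcases Finset.mem_insert.1 hB' with hB'b | hB'G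
      · rw [hB'b] at hsub
        refine Or.inr ?_
        refine ⟨SSet.stdSimplex.objMk
          ⟨fun a => (eIso n J k b hcard).symm ⟨σ.down.toOrderHom a, hsub a⟩, ?_⟩, ?_⟩
        · intro a a' haa'
          exact (eIso n J k b hcard).symm.monotone
            (Subtype.mk_le_mk.2 (σ.down.toOrderHom.monotone haa'))
        · refine Subtype.ext (simplex_ext fun a => ?_).symm
          show σ.down.toOrderHom a = emap n J k b hcard
            ((eIso n J k b hcard).symm ⟨σ.down.toOrderHom a, hsub a⟩)
          exact (congrArg Subtype.val
            ((eIso n J k b hcard).apply_symm_apply ⟨σ.down.toOrderHom a, hsub a⟩)).symm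
      · exact Or.inl ⟨⟨σ, Or.inr ⟨B', hB'G, hsub⟩⟩, rfl⟩

/-- Inverse to `proj` when `G` contains the full complement. -/
def projInv (hfull : (insert k J)ᶜ ∈ G) : Δ[n] ⟶ stage.{v} n J k G where
  app q := TypeCat.ofHom fun σ => ⟨σ, Or.inr ⟨(insert k J)ᶜ, hfull, fun a => by
    by_cases h : σ.down.toOrderHom a ∈ insert k J
    · rcases Finset.mem_insert.1 h with h1 | h2
      · exact Finset.mem_insert.2 (Or.inl h1)
      · exact Finset.mem_insert_of_mem (Finset.mem_union_left _ h2)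
    · exact Finset.mem_insert_of_mem (Finset.mem_union_right _ (Finset.mem_compl.2 h))⟩⟩

lemma proj_isIso (hfull : (insert k J)ᶜ ∈ G) : IsIso (proj.{v} n J k G) := by
  refine ⟨projInv.{v} n J k G hfull, ?_, ?_⟩
  · ext q σ
    exact Subtype.ext rfl
  · ext q σ
    rfl

lemma stage_expansion (m : ℕ) (hJm : J.card = m) (hkJ : k ∉ J) :
    ∀ (N : ℕ) (G : Finset (Finset (Fin (n + 1)))),
      G ⊆ (insert k J)ᶜ.powerset →
      (∀ B ∈ G, ∀ B' ⊆ B, B' ∈ G) →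
      ((insert k J)ᶜ.powerset \ G).card = N →
      ∀ d : ℕ, (∀ B ∈ (insert k J)ᶜ.powerset, B ∉ G → d ≤ m + B.card) →
      ExpansionAux.{v} m d (proj.{v} n J k G) := by
  intro N
  induction N with
  | zero =>
    intro G hG hdc hN d hd
    have hsub : (insert k J)ᶜ.powerset ⊆ G :=
      Finset.sdiff_eq_empty_iff_subset.1 (Finset.card_eq_zero.1 hN)
    exact ExpansionAux.of_iso d _ (proj_isIso n J k G (hsub (Finset.mem_powerset_self _)))
  | succ N ih =>
    intro G hG hdc hN d hd
    have hne : ((insert k J)ᶜ.powerset \ G).Nonempty :=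
      Finset.card_pos.1 (by rw [hN]; exact N.succ_pos)
    obtain ⟨b, hbmem, hbmin⟩ := Finset.exists_min_image _ Finset.card hne
    obtain ⟨hbP, hbG⟩ := Finset.mem_sdiff.1 hbmem
    have hbD : ∀ c ∈ b, c ∉ insert k J := fun c hc =>
      Finset.mem_compl.1 (Finset.mem_powerset.1 hbP hc)
    have hkb : k ∉ J ∪ b := by
      intro h
      rcases Finset.mem_union.1 h with h | h
      · exact hkJ h
      · exact hbD k h (Finset.mem_insert_self _ _)
    have hdisj : Disjoint J b := Finset.disjoint_left.2 fun a haJ hab =>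
      hbD a hab (Finset.mem_insert_of_mem haJ)
    have hcard : (insert k (J ∪ b)).card = (m + b.card) + 1 := by
      rw [Finset.card_insert_of_notMem hkb, Finset.card_union_of_disjoint hdisj, hJm]
    have hfaces : ∀ c ∈ b, b \ {c} ∈ G := by
      intro c hc
      by_contra hnot
      have hmem2 : b \ {c} ∈ (insert k J)ᶜ.powerset \ G := Finset.mem_sdiff.2
        ⟨Finset.mem_powerset.2 (Finset.sdiff_subset.trans (Finset.mem_powerset.1 hbP)), hnot⟩
      have h1 := hbmin _ hmem2
      have h2 : (b \ {c}).card < b.card := by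
        rw [Finset.card_sdiff_of_subset (Finset.singleton_subset_iff.2 hc), Finset.card_singleton]
        have : 0 < b.card := Finset.card_pos.2 ⟨c, hc⟩
        omega
      omega
    have hdc' : ∀ B ∈ insert b G, ∀ B' ⊆ B, B' ∈ insert b G := by
      intro B hB B' hB'
      rcases Finset.mem_insert.1 hB with hBb | hBG
      · by_cases hB'b : B' = b
        · exact hB'b ▸ Finset.mem_insert_self _ _
        · refine Finset.mem_insert_of_mem ?_
          by_contra hnot
          have hB'2 : B' ⊆ b := hBb ▸ hB'
          have hmem2 : B' ∈ (insert k J)ᶜ.powerset \ G := Finset.mem_sdiff.2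
            ⟨Finset.mem_powerset.2 (hB'2.trans (Finset.mem_powerset.1 hbP)), hnot⟩
          have h1 := hbmin _ hmem2
          have h2 : B'.card < b.card := Finset.card_lt_card (ssubset_of_subset_of_ne hB'2 hB'b)
          omega
      · exact Finset.mem_insert_of_mem (hdc B hBG B' hB')
    have hG' : insert b G ⊆ (insert k J)ᶜ.powerset := Finset.insert_subset hbP hG
    have hN' : ((insert k J)ᶜ.powerset \ insert b G).card = N := by
      have heq : (insert k J)ᶜ.powerset \ insert b G = ((insert k J)ᶜ.powerset \ G).erase b := by
        ext B
        simp only [Finset.mem_sdiff, Finset.mem_erase, Finset.mem_insert, not_or]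
        tauto
      rw [heq, Finset.card_erase_of_mem hbmem, hN]
      omega
    have hd' : ∀ B ∈ (insert k J)ᶜ.powerset, B ∉ insert b G → m + b.card ≤ m + B.card :=
      fun B hBp hBg => Nat.add_le_add_left
        (hbmin B (Finset.mem_sdiff.2 ⟨hBp, fun h => hBg (Finset.mem_insert_of_mem h)⟩)) m
    have key : proj.{v} n J k G
        = stageIncl.{v} n J k G (insert b G) (Finset.subset_insert _ _)
          ≫ proj.{v} n J k (insert b G) := by
      ext q σ
      rfl
    rw [key]
    exact ExpansionAux.step d (m + b.card) (Nat.le_add_right _ _) (hd b hbP hbG)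
      (jdx n J k b hcard) (ymap.{v} n J k b hcard G hfaces) _ (xmap.{v} n J k b hcard G)
      (isPushout_step n J k b hcard G hkJ hbG hbD hdc hfaces)
      (ih (insert b G) hG' hdc' hN' (m + b.card) hd')

/-- Identification of the union of faces with the initial stage. -/
def unionIso : unionOfFaces.{v} n J ⟶ stage.{v} n J k ∅ where
  app q := TypeCat.ofHom fun σ => ⟨σ.1, Or.inl σ.2⟩

/-- Inverse of `unionIso`. -/
def unionIsoInv : stage.{v} n J k ∅ ⟶ unionOfFaces.{v} n J where
  app q := TypeCat.ofHom fun σ => ⟨σ.1, σ.2.resolve_right (by rintro ⟨B, hB, -⟩; exact Finset.notMem_empty B hB)⟩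

lemma unionIso_isIso : IsIso (unionIso.{v} n J k) := by
  refine ⟨unionIsoInv.{v} n J k, ?_, ?_⟩
  · ext q σ
    exact Subtype.ext rfl
  · ext q σ
    exact Subtype.ext rfl

end Expand

lemma ExpansionAux.precomp {m n₀ : ℕ} {S' S T : SSet.{v}} (e : S' ⟶ S) (he : IsIso e)
    {i : S ⟶ T} (h : ExpansionAux m n₀ i) : ExpansionAux m n₀ (e ≫ i) := by
  cases h with
  | of_iso n₀ i hi =>
    exact ExpansionAux.of_iso n₀ _ (by exact @IsIso.comp_isIso _ _ _ _ _ _ _ he hi)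
  | step n₀ nn hmn h₀ j y i x hpo hrest =>
    rw [← Category.assoc]
    haveI := he
    exact ExpansionAux.step n₀ nn hmn h₀ j (y ≫ inv e) (e ≫ i) x
      (hpo.of_iso (Iso.refl _) (asIso e).symm (Iso.refl _) (Iso.refl _)
        (by simp) (by simp) (by simp) (by simp)) hrest


/-- If `S ⊆ Δⁿ` is the union of `m` of the codimension-one faces of the
`n`-simplex, `0 < m ≤ n`, then the inclusion `S ↪ Δⁿ` is an `m`-expansion. -/
theorem unionOfFaces_isExpansion (n m : ℕ) (hm : 0 < m) (hmn : m ≤ n)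
    (J : Finset (Fin (n + 1))) (hJ : J.card = m) :
    IsExpansion m (unionOfFacesIncl.{v} n J) := by
  have hkex : ∃ k, k ∉ J := by
    by_contra h
    push_neg at h
    have huniv : J = Finset.univ := Finset.eq_univ_iff_forall.2 h
    have hcardJ := hJ
    rw [huniv, Finset.card_univ, Fintype.card_fin] at hcardJ
    omega
  obtain ⟨k, hk⟩ := hkex
  have hmain := Expand.stage_expansion.{v} n J k m hJ hk ((insert k J)ᶜ.powerset \ ∅).card ∅
    (Finset.empty_subset _) (fun B hB => absurd hB (Finset.notMem_empty _)) rfl 0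
    (fun _ _ _ => Nat.zero_le _)
  have key : unionOfFacesIncl.{v} n J = Expand.unionIso.{v} n J k ≫ Expand.proj.{v} n J k ∅ := by
    ext q σ
    rfl
  rw [IsExpansion, key]
  exact ExpansionAux.precomp _ (Expand.unionIso_isIso.{v} n J k) hmain

end Paper
end

section
/- Let 𝒱 be a descent category, k > 0, and X a k-category in 𝒱. Then X is (k+1)-coskeletal: for every n ≥ 0 the natural morphism Xₙ → Map(sk_{k+1}Δⁿ, X), restriction along the inclusion of the (k+1)-skeleton sk_{k+1}Δⁿ ↪ Δⁿ, is an isomorphism. -/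
open CategoryTheory CategoryTheory.Limits Simplicial Opposite

universe v u

namespace Paper

variable {V : Type u} [Category.{v} V]

/-- The simplicial set of maps from an object `A` into a simplicial object `X`. -/
def sHomF (X : CategoryTheory.SimplicialObject V) : Vᵒᵖ ⥤ SSet.{v} :=
  coyoneda ⋙ (Functor.whiskeringLeft SimplexCategoryᵒᵖ V (Type v)).obj X

/-- The presheaf on `V` of simplicial maps from a simplicial set `T` into a
simplicial object `X`; for `T` finite this is representable by the finite
limit `Map(T,X)`. -/
def mapPresheaf (T : SSet.{v}) (X : SimplicialObject V) : Vᵒᵖ ⥤ Type v :=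
  sHomF X ⋙ coyoneda.obj (op T)

/-- Restriction along a morphism of simplicial sets. -/
def restrictMap {S T : SSet.{v}} (i : S ⟶ T) (X : SimplicialObject V) :
    mapPresheaf T X ⟶ mapPresheaf S X :=
  Functor.whiskerLeft (sHomF X) (coyoneda.map i.op)

/-- Pushforward along a morphism of simplicial objects. -/
def pushMap (T : SSet.{v}) {X Y : SimplicialObject V} (f : X ⟶ Y) :
    mapPresheaf T X ⟶ mapPresheaf T Y :=
  Functor.whiskerRight (Functor.whiskerLeft coyoneda ((Functor.whiskeringLeft SimplexCategoryᵒᵖ V (Type v)).map f))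
    (coyoneda.obj (op T))

@[simp]
lemma restrictMap_id (T : SSet.{v}) (X : SimplicialObject V) :
    restrictMap (𝟙 T) X = 𝟙 (mapPresheaf T X) := by
  simp [restrictMap]
  rfl

lemma restrictMap_comp {S T U : SSet.{v}} (i : S ⟶ T) (j : T ⟶ U) (X : SimplicialObject V) :
    restrictMap (i ≫ j) X = restrictMap j X ≫ restrictMap i X := by
  ext A φ
  exact Category.assoc i j φ

lemma restrict_push_comm {S T : SSet.{v}} (i : S ⟶ T) {X Y : SimplicialObject V} (f : X ⟶ Y) :
    restrictMap i X ≫ pushMap S f = pushMap T f ≫ restrictMap i Y := by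
  ext A φ
  exact Category.assoc i φ ((Functor.whiskerLeft coyoneda
    ((Functor.whiskeringLeft SimplexCategoryᵒᵖ V (Type v)).map f)).app A)

/-- The relative mapping presheaf `Map(S ↪ T, f) = Map(S,X) ×_{Map(S,Y)} Map(T,Y)`. -/
noncomputable def relMapPresheaf {S T : SSet.{v}} (i : S ⟶ T) {X Y : SimplicialObject V}
    (f : X ⟶ Y) : Vᵒᵖ ⥤ Type v :=
  pullback (pushMap S f) (restrictMap i Y)

/-- The canonical morphism `Map(T,X) ⟶ Map(S ↪ T, f)`. -/
noncomputable def toRelMap {S T : SSet.{v}} (i : S ⟶ T) {X Y : SimplicialObject V}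
    (f : X ⟶ Y) : mapPresheaf T X ⟶ relMapPresheaf i f :=
  pullback.lift (restrictMap i X) (pushMap T f) (restrict_push_comm i f)

/-- A morphism of presheaves on `V` "is" a morphism of `V` satisfying the
morphism property `P`: it is matched with such a morphism by isomorphisms
with representable presheaves. -/
def RepMor (P : MorphismProperty V) {F G : Vᵒᵖ ⥤ Type v} (η : F ⟶ G) : Prop :=
  ∃ (A B : V) (g : A ⟶ B), P g ∧
    ∃ (eF : yoneda.obj A ≅ F) (eG : yoneda.obj B ≅ G), yoneda.map g ≫ eG.hom = eF.hom ≫ η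

/-- A descent category structure: a subcategory of covers, stable under
pullback, and satisfying the cancellation property. (The finite limit
axiom (D1) is the `HasFiniteLimits V` hypothesis.) -/
structure DescentData (V : Type u) [Category.{v} V] where
  cover : MorphismProperty V
  id_mem : ∀ X : V, cover (𝟙 X)
  comp_mem : ∀ {X Y Z : V} (f : X ⟶ Y) (g : Y ⟶ Z), cover f → cover g → cover (f ≫ g)
  pullback_mem : ∀ {P X Y Z : V} {fst : P ⟶ X} {snd : P ⟶ Y} {f : X ⟶ Z} {g : Y ⟶ Z},
    IsPullback fst snd f g → cover g → cover fst
  cancel : ∀ {X Y Z : V} (f : X ⟶ Y) (g : Y ⟶ Z), cover f → cover (f ≫ g) → cover g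

/-- A simplicial object `X` is a `k`-groupoid if each `Xₙ → Map(Λⁿᵢ, X)` is a
cover for `n > 0` and an isomorphism for `n > k`. -/
def IsKGroupoid (P : MorphismProperty V) (k : ℕ) (X : SimplicialObject V) : Prop :=
  (∀ (n : ℕ) (i : Fin (n + 2)),
      RepMor P (restrictMap (SSet.horn (n + 1) i).ι X)) ∧
  (∀ (n : ℕ) (i : Fin (n + 1)), k < n →
      IsIso (restrictMap (SSet.horn n i).ι X))

/-- A morphism of simplicial objects is a fibration if each
`Xₙ → Map(Λⁿᵢ ↪ Δⁿ, f)` is a cover for `n > 0`. -/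
def IsFibration (P : MorphismProperty V) {X Y : SimplicialObject V} (f : X ⟶ Y) : Prop :=
  ∀ (n : ℕ) (i : Fin (n + 2)), RepMor P (toRelMap (SSet.horn (n + 1) i).ι f)

/-- A morphism of simplicial objects is a hypercover if each
`Xₙ → Map(∂Δⁿ ↪ Δⁿ, f)` is a cover for `n ≥ 0`. -/
def IsHypercover (P : MorphismProperty V) {X Y : SimplicialObject V} (f : X ⟶ Y) : Prop :=
  ∀ n : ℕ, RepMor P (toRelMap (SSet.boundary n).ι f)

/-- A morphism of `k`-groupoids is a weak equivalence if it factors as `s ≫ q`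
where `q` is a hypercover and `s` is a section of a hypercover. -/
def IsWeakEquivalence (P : MorphismProperty V) (k : ℕ) {X Y : SimplicialObject V}
    (f : X ⟶ Y) : Prop :=
  ∃ (Q : SimplicialObject V) (_ : IsKGroupoid P k Q) (p : Q ⟶ X) (q : Q ⟶ Y) (s : X ⟶ Q),
    IsHypercover P p ∧ IsHypercover P q ∧ s ≫ p = 𝟙 X ∧ f = s ≫ q


/-- The thick `n`-simplex `𝚫ⁿ`, the `0`-coskeleton of `Δⁿ`: its `k`-simplices
are all functions `{0,…,k} → {0,…,n}`. -/
def thick (n : ℕ) : SSet.{v} where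
  obj k := ULift (Fin (k.unop.len + 1) → Fin (n + 1))
  map α := TypeCat.ofHom fun f => ULift.up (f.down ∘ α.unop.toOrderHom)

/-- The inclusion of the vertex `0` of the thick 1-simplex `𝚫¹`. -/
def vertexThick1 : (Δ[0] : SSet.{v}) ⟶ thick.{v} 1 where
  app k := TypeCat.ofHom fun _ => ULift.up fun _ => 0

/-- The canonical inclusion `Δⁿ ↪ 𝚫ⁿ` of the standard simplex into the thick
simplex. -/
def simplexToThick (n : ℕ) : (Δ[n] : SSet.{v}) ⟶ thick.{v} n where
  app k := TypeCat.ofHom fun σ => ULift.up σ.down.toOrderHom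

/-- A simplicial object `X` is a `k`-category if each inner horn morphism
`Xₙ → Map(Λⁿᵢ, X)`, `0 < i < n`, is a cover, and an isomorphism for `n > k`,
and the morphism `Map(𝚫¹, X) → X₀` induced by the inclusion of a vertex
`Δ⁰ ↪ 𝚫¹` is a cover. -/
def IsKCategory {V : Type u} [Category.{v} V] (P : MorphismProperty V) (k : ℕ)
    (X : SimplicialObject V) : Prop :=
  (∀ (n : ℕ) (i : Fin (n + 1)), 0 < (i : ℕ) → (i : ℕ) < n →
      RepMor P (restrictMap (SSet.horn n i).ι X)) ∧
  (∀ (n : ℕ) (i : Fin (n + 1)), 0 < (i : ℕ) → (i : ℕ) < n → k < n →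
      IsIso (restrictMap (SSet.horn n i).ι X)) ∧
  RepMor P (restrictMap vertexThick1 X)

/-- A morphism of `k`-categories is a quasi-fibration if each inner horn
morphism `Xₙ → Map(Λⁿᵢ ↪ Δⁿ, f)`, `0 < i < n`, is a cover, and the morphism
`Map(𝚫¹,X) → X₀ ×_{Y₀} Map(𝚫¹,Y)` induced by a vertex inclusion is a
cover. -/
def IsQuasiFibration {V : Type u} [Category.{v} V] (P : MorphismProperty V)
    {X Y : SimplicialObject V} (f : X ⟶ Y) : Prop :=
  (∀ (n : ℕ) (i : Fin (n + 1)), 0 < (i : ℕ) → (i : ℕ) < n →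
      RepMor P (toRelMap (SSet.horn n i).ι f)) ∧
  RepMor P (toRelMap vertexThick1 f)

/-- The `j`-skeleton of the standard simplex `Δ[n]`: the simplicial subset of
simplices whose image has at most `j + 1` vertices, i.e. which factor through
a face of dimension at most `j`. -/
def simplexSkeleton (j n : ℕ) : SSet.{v} where
  obj m := { σ : (Δ[n] : SSet.{v}).obj m //
    (Finset.image (SSet.stdSimplex.asOrderHom σ) Finset.univ).card ≤ j + 1 }
  map {m m'} α := TypeCat.ofHom fun σ => ⟨(Δ[n] : SSet.{v}).map α σ.1, by
    refine le_trans (Finset.card_le_card ?_) σ.2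
    intro x hx
    obtain ⟨a, -, rfl⟩ := Finset.mem_image.mp hx
    exact Finset.mem_image.mpr ⟨α.unop.toOrderHom a, Finset.mem_univ _, rfl⟩⟩

/-- The inclusion of the `j`-skeleton `sk_j Δⁿ ↪ Δⁿ`. -/
def simplexSkeletonIncl (j n : ℕ) : simplexSkeleton.{v} j n ⟶ Δ[n] where
  app m := TypeCat.ofHom fun σ => Subtype.val σ

section Coskeletal

open SSet SimplexCategory

variable {W : SSet.{v}}

/-- The simplex of `Δ⦋n⦌` corresponding to a morphism in `SimplexCategory`. -/
def sx {n : ℕ} {p : SimplexCategoryᵒᵖ} (f : p.unop ⟶ ⦋n⦌) :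
    (SSet.stdSimplex.{v}.obj ⦋n⦌).obj p :=
  SSet.stdSimplex.objEquiv.symm f

lemma sx_objEquiv {n : ℕ} {p : SimplexCategoryᵒᵖ}
    (σ : (SSet.stdSimplex.{v}.obj ⦋n⦌).obj p) :
    sx (SSet.stdSimplex.objEquiv σ) = σ :=
  Equiv.symm_apply_apply _ _

lemma objEquiv_sx {n : ℕ} {p : SimplexCategoryᵒᵖ} (f : p.unop ⟶ ⦋n⦌) :
    SSet.stdSimplex.objEquiv (sx.{v} f) = f :=
  Equiv.apply_symm_apply _ _

lemma map_sx {n : ℕ} {p q : SimplexCategoryᵒᵖ} (α : p ⟶ q) (f : p.unop ⟶ ⦋n⦌) :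
    (SSet.stdSimplex.{v}.obj ⦋n⦌).map α (sx f) = sx (α.unop ≫ f) := by
  rw [SSet.stdSimplex.map_apply]
  rfl

lemma asOrderHom_sx {n : ℕ} {p : SimplexCategoryᵒᵖ} (f : p.unop ⟶ ⦋n⦌) :
    SSet.stdSimplex.asOrderHom (sx.{v} f) = f.toOrderHom := rfl

lemma hom_app_sx {n : ℕ} (φ : SSet.stdSimplex.{v}.obj ⦋n⦌ ⟶ W) {p : SimplexCategoryᵒᵖ}
    (f : p.unop ⟶ ⦋n⦌) :
    φ.app p (sx f) = W.map f.op (φ.app (op (SimplexCategory.mk n)) (sx (𝟙 (SimplexCategory.mk n)))) := by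
  have h : (sx f : (SSet.stdSimplex.{v}.obj ⦋n⦌).obj p)
      = (SSet.stdSimplex.{v}.obj ⦋n⦌).map f.op (sx (𝟙 (SimplexCategory.mk n))) := by
    rw [map_sx]; simp
  rw [h]
  exact (NatTrans.naturality_apply φ f.op _)

/-- The top simplex classified by a morphism `Δ⦋n⦌ ⟶ W`. -/
def tp {n : ℕ} (φ : SSet.stdSimplex.{v}.obj ⦋n⦌ ⟶ W) : W.obj (op (SimplexCategory.mk n)) :=
  φ.app (op (SimplexCategory.mk n)) (sx (𝟙 (SimplexCategory.mk n)))

lemma tp_yonedaEquiv_symm {n : ℕ} (x : W.obj (op (SimplexCategory.mk n))) :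
    tp ((SSet.yonedaEquiv (X := W) (n := SimplexCategory.mk n)).symm x) = x :=
  (SSet.yonedaEquiv (X := W) (n := SimplexCategory.mk n)).apply_symm_apply x

lemma hom_ext_tp {n : ℕ} {φ ψ : SSet.stdSimplex.{v}.obj ⦋n⦌ ⟶ W}
    (h : tp φ = tp ψ) : φ = ψ := by
  ext p σ
  rw [show σ = sx (SSet.stdSimplex.objEquiv σ) from (sx_objEquiv σ).symm]
  exact (hom_app_sx φ _).trans ((congrArg _ h).trans (hom_app_sx ψ _).symm)

lemma symm_app_sx {n : ℕ} (x : W.obj (op (SimplexCategory.mk n))) {p : SimplexCategoryᵒᵖ} (f : p.unop ⟶ ⦋n⦌) :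
    ((SSet.yonedaEquiv (X := W) (n := SimplexCategory.mk n)).symm x).app p (sx f) = W.map f.op x := by
  rw [hom_app_sx]
  exact congrArg _ (tp_yonedaEquiv_symm x)

/-- Factoring a morphism that misses `j` through the face `δ j`. -/
def factorδ {Δ : SimplexCategory} {nn : ℕ} (f : Δ ⟶ ⦋nn + 1⦌) (j : Fin (nn + 2)) :
    Δ ⟶ ⦋nn⦌ :=
  f ≫ SimplexCategory.σ (Fin.predAbove 0 j)

lemma factorδ_spec {Δ : SimplexCategory} {nn : ℕ} (f : Δ ⟶ ⦋nn + 1⦌) (j : Fin (nn + 2))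
    (hj : ∀ a, f.toOrderHom a ≠ j) : factorδ f j ≫ SimplexCategory.δ j = f :=
  SimplexCategory.factor_δ_spec (m := Δ.len) f j hj

lemma horn_exists_missing {m : ℕ} {i : Fin (m + 1)} {p : SimplexCategoryᵒᵖ}
    (σ : (SSet.horn.{v} m i).obj p) :
    ∃ t : Fin (m + 1), t ≠ i ∧ ∀ a, SSet.stdSimplex.asOrderHom σ.1 a ≠ t := by
  have h := σ.2
  rw [SSet.mem_horn_iff, Set.ne_univ_iff_exists_notMem] at h
  obtain ⟨t, ht⟩ := h
  simp only [Set.mem_union, Set.mem_range, Set.mem_singleton_iff, not_or, not_exists] at ht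
  exact ⟨t, ht.2, ht.1⟩

section

variable {k : ℕ}
variable (H : ∀ (m : ℕ) (i : Fin (m + 1)), 0 < (i : ℕ) → (i : ℕ) < m → k < m →
    Function.Bijective
      (fun φ : (SSet.stdSimplex.{v}.obj ⦋m⦌ ⟶ W) => (SSet.horn m i).ι ≫ φ))

include H in
/-- two simplices of dimension `> k` (and `≥ 2`) with the same boundary are equal. -/
lemma eq_of_boundary {m : ℕ} (hm : k < m + 2) (x y : W.obj (op (SimplexCategory.mk (m+2))))
    (hb : ∀ t : Fin (m + 3),
      W.map (SimplexCategory.δ t).op x = W.map (SimplexCategory.δ t).op y) : x = y := by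
  have h1 : (0 : ℕ) < ((1 : Fin (m + 3)) : ℕ) := by
    rw [Fin.val_one]; omega
  have h2 : ((1 : Fin (m + 3)) : ℕ) < m + 2 := by
    rw [Fin.val_one]; omega
  have hinj := (H (m + 2) 1 h1 h2 hm).injective
  have key : (SSet.horn (m + 2) 1).ι ≫ (SSet.yonedaEquiv (X := W) (n := SimplexCategory.mk (m+2))).symm x
      = (SSet.horn (m + 2) 1).ι ≫ (SSet.yonedaEquiv (X := W) (n := SimplexCategory.mk (m+2))).symm y := by
    ext p σ
    obtain ⟨t, _, hta⟩ := horn_exists_missing σ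
    show ((SSet.yonedaEquiv (X := W) (n := SimplexCategory.mk (m+2))).symm x).app p σ.1
      = ((SSet.yonedaEquiv (X := W) (n := SimplexCategory.mk (m+2))).symm y).app p σ.1
    rw [show (σ.1 : (SSet.stdSimplex.{v}.obj ⦋m + 2⦌).obj p)
        = sx (SSet.stdSimplex.objEquiv σ.1) from (sx_objEquiv σ.1).symm]
    rw [symm_app_sx, symm_app_sx]
    set f := SSet.stdSimplex.objEquiv σ.1 with hf
    have hspec : factorδ f t ≫ SimplexCategory.δ t = f := factorδ_spec f t hta
    rw [← hspec, op_comp, FunctorToTypes.map_comp_apply, FunctorToTypes.map_comp_apply, hb t]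
  exact (SSet.yonedaEquiv (X := W) (n := SimplexCategory.mk (m+2))).symm.injective (hinj key)

end


-- ### image of a morphism to ⦋nn⦌

/-- The image finset of a morphism in `SimplexCategory`. -/
def im {D : SimplexCategory} {nn : ℕ} (f : D ⟶ ⦋nn⦌) : Finset (Fin (nn + 1)) :=
  Finset.image ⇑f.toOrderHom Finset.univ

lemma im_comp {D' D : SimplexCategory} {nn : ℕ} (α : D' ⟶ D) (f : D ⟶ ⦋nn⦌) :
    im (α ≫ f) = Finset.image ⇑f.toOrderHom (Finset.image ⇑α.toOrderHom Finset.univ) := by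
  simp [im, SimplexCategory.comp_toOrderHom, Finset.image_image, Function.comp]

lemma im_comp_subset {D' D : SimplexCategory} {nn : ℕ} (α : D' ⟶ D) (f : D ⟶ ⦋nn⦌) :
    im (α ≫ f) ⊆ im f := by
  rw [im_comp]
  exact Finset.image_subset_image (Finset.subset_univ _)

lemma card_im_le {D : SimplexCategory} {nn : ℕ} (f : D ⟶ ⦋nn⦌) :
    (im f).card ≤ D.len + 1 := by
  refine le_trans (Finset.card_image_le) ?_
  simp

section Skel

variable {n : ℕ}

/-- A simplex of the skeleton from a morphism with small image. -/
def inSk (j : ℕ) {p : SimplexCategoryᵒᵖ} (f : p.unop ⟶ ⦋n⦌) (h : (im f).card ≤ j + 1) :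
    (simplexSkeleton.{v} j n).obj p :=
  ⟨sx f, h⟩

/-- Inclusion between skeleta. -/
def skIncl (a b : ℕ) (h : a ≤ b) : simplexSkeleton.{v} a n ⟶ simplexSkeleton.{v} b n where
  app p := TypeCat.ofHom fun σ => ⟨σ.1, σ.2.trans (by omega)⟩
  naturality p q α := rfl

lemma sk_app_map {j : ℕ} (g : simplexSkeleton.{v} j n ⟶ W) {p q : SimplexCategoryᵒᵖ}
    (α : p ⟶ q) (f : p.unop ⟶ ⦋n⦌) (hf : (im f).card ≤ j + 1)
    (hf' : (im (α.unop ≫ f)).card ≤ j + 1) :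
    W.map α (g.app p (inSk j f hf)) = g.app q (inSk j (α.unop ≫ f) hf') := by
  rw [← FunctorToTypes.naturality]
  congr 1

lemma g_congr {j : ℕ} (g : simplexSkeleton.{v} j n ⟶ W) {p : SimplexCategoryᵒᵖ}
    {f f' : p.unop ⟶ ⦋n⦌} (hff : f = f')
    (h : (im f).card ≤ j + 1) (h' : (im f').card ≤ j + 1) :
    g.app p (inSk j f h) = g.app p (inSk j f' h') := by
  subst hff; rfl

lemma objEquiv_map {m : ℕ} {p q : SimplexCategoryᵒᵖ} (α : p ⟶ q)
    (x : (SSet.stdSimplex.{v}.obj ⦋m⦌).obj p) :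
    SSet.stdSimplex.objEquiv ((SSet.stdSimplex.{v}.obj ⦋m⦌).map α x)
      = α.unop ≫ SSet.stdSimplex.objEquiv x := by
  rw [SSet.stdSimplex.map_apply, Equiv.apply_symm_apply]

end Skel

section Fill

variable {k n : ℕ}
variable (H : ∀ (m : ℕ) (i : Fin (m + 1)), 0 < (i : ℕ) → (i : ℕ) < m → k < m →
    Function.Bijective
      (fun φ : (SSet.stdSimplex.{v}.obj ⦋m⦌ ⟶ W) => (SSet.horn m i).ι ≫ φ))
variable {j : ℕ} (hk : 0 < k) (hj : k + 1 ≤ j)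
variable (g : simplexSkeleton.{v} j n ⟶ W) (ι : Fin (j + 2) ↪o Fin (n + 1))

/-- The mono `⦋j+1⦌ ⟶ ⦋n⦌` corresponding to an order embedding. -/
def embHom : (⦋j+1⦌ : SimplexCategory) ⟶ ⦋n⦌ :=
  SimplexCategory.mkHom ⟨⇑ι, ι.monotone⟩

lemma card_im_comp_emb {D : SimplexCategory} (ρ : D ⟶ ⦋j+1⦌) :
    (im (ρ ≫ embHom ι)).card = (im ρ).card := by
  rw [im_comp]
  exact Finset.card_image_of_injective _ ι.injective

lemma hornCard {p : SimplexCategoryᵒᵖ} (σ : (SSet.horn.{v} (j+1) 1).obj p) :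
    (im (SSet.stdSimplex.objEquiv σ.1 ≫ embHom ι)).card ≤ j + 1 := by
  obtain ⟨t, _, hta⟩ := horn_exists_missing σ
  rw [card_im_comp_emb]
  have hsub : im (SSet.stdSimplex.objEquiv σ.1) ⊆ Finset.univ.erase t := by
    intro x hx
    obtain ⟨a, -, rfl⟩ := Finset.mem_image.mp hx
    exact Finset.mem_erase.mpr ⟨hta a, Finset.mem_univ _⟩
  refine le_trans (Finset.card_le_card hsub) ?_
  rw [Finset.card_erase_of_mem (Finset.mem_univ t), Finset.card_univ, Fintype.card_fin]
  omega

/-- The horn in `W` obtained by restricting `g` along the faces of `ι`. -/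
def hornMap : (SSet.horn.{v} (j+1) 1 : SSet.{v}) ⟶ W where
  app p := TypeCat.ofHom fun σ => g.app p (inSk j (SSet.stdSimplex.objEquiv σ.1 ≫ embHom ι)
    (hornCard ι σ))
  naturality p q α := by
    ext σ
    show g.app q (inSk j _ _) = W.map α (g.app p (inSk j _ _))
    rw [sk_app_map g α (SSet.stdSimplex.objEquiv σ.1 ≫ embHom ι)
      (hornCard ι σ) (le_trans (Finset.card_le_card (im_comp_subset _ _)) (hornCard ι σ))]
    refine g_congr g ?_ _ _
    have hval : ((SSet.horn.{v} (j+1) 1 : SSet.{v}).map α σ).1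
        = (SSet.stdSimplex.{v}.obj ⦋j+1⦌).map α σ.1 := rfl
    erw [hval, objEquiv_map, Category.assoc]

/-- A filler for the horn `hornMap`. -/
noncomputable def fillHom : SSet.stdSimplex.{v}.obj ⦋j+1⦌ ⟶ W :=
  ((H (j+1) 1 (by rw [Fin.val_one]; omega) (by rw [Fin.val_one]; omega) (by omega)).surjective
    (hornMap g ι)).choose

lemma fillHom_spec :
    (SSet.horn (j+1) 1).ι ≫ fillHom H hk hj g ι = hornMap g ι :=
  ((H (j+1) 1 (by rw [Fin.val_one]; omega) (by rw [Fin.val_one]; omega) (by omega)).surjective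
    (hornMap g ι)).choose_spec

/-- The filling `(j+1)`-simplex. -/
noncomputable def fillv : W.obj (op ⦋j+1⦌) := tp (fillHom H hk hj g ι)

lemma fillv_face (t : Fin (j+2)) (ht : t ≠ 1)
    (hc : (im (SimplexCategory.δ t ≫ embHom ι)).card ≤ j + 1) :
    W.map (SimplexCategory.δ t).op (fillv H hk hj g ι)
      = g.app (op ⦋j⦌) (inSk j (SimplexCategory.δ t ≫ embHom ι) hc) := by
  have hmem : Set.range (SSet.stdSimplex.asOrderHom
        (sx (SimplexCategory.δ t) : (SSet.stdSimplex.{v}.obj ⦋j+1⦌).obj (op ⦋j⦌)))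
      ∪ {(1 : Fin (j+2))} ≠ Set.univ := by
    intro huniv
    have hmm : t ∈ Set.range (SSet.stdSimplex.asOrderHom
        (sx (SimplexCategory.δ t) : (SSet.stdSimplex.{v}.obj ⦋j+1⦌).obj (op ⦋j⦌)))
      ∪ {(1 : Fin (j+2))} := huniv ▸ Set.mem_univ t
    rcases hmm with h | h
    · obtain ⟨a, ha⟩ := h
      exact Fin.succAbove_ne t a ha
    · exact ht (Set.mem_singleton_iff.mp h)
  calc W.map (SimplexCategory.δ t).op (fillv H hk hj g ι)
      = (fillHom H hk hj g ι).app (op ⦋j⦌) (sx (SimplexCategory.δ t)) := (hom_app_sx _ _).symm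
    _ = ((SSet.horn (j+1) 1).ι ≫ fillHom H hk hj g ι).app (op ⦋j⦌)
          ⟨sx (SimplexCategory.δ t), hmem⟩ := rfl
    _ = (hornMap g ι).app (op ⦋j⦌) ⟨sx (SimplexCategory.δ t), hmem⟩ := by
          rw [fillHom_spec]
    _ = g.app (op ⦋j⦌) (inSk j (SimplexCategory.δ t ≫ embHom ι) hc) := by
          refine g_congr g ?_ _ _
          rw [objEquiv_sx]

lemma fillv_face_all (t : Fin (j+2))
    (hc : (im (SimplexCategory.δ t ≫ embHom ι)).card ≤ j + 1) :
    W.map (SimplexCategory.δ t).op (fillv H hk hj g ι)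
      = g.app (op ⦋j⦌) (inSk j (SimplexCategory.δ t ≫ embHom ι) hc) := by
  by_cases ht : t = 1
  · subst ht
    obtain ⟨e, rfl⟩ : ∃ e, j = e + 2 := ⟨j - 2, by omega⟩
    have face2 : ∀ (a : Fin (e+3)) (b : Fin (e+4)), b ≠ 1 →
        ∀ (hcc : (im ((SimplexCategory.δ a ≫ SimplexCategory.δ b) ≫ embHom ι)).card ≤ e + 3),
        W.map (SimplexCategory.δ a ≫ SimplexCategory.δ b).op (fillv H hk hj g ι)
          = g.app (op ⦋e+1⦌)
              (inSk (e+2) ((SimplexCategory.δ a ≫ SimplexCategory.δ b) ≫ embHom ι) hcc) := by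
      intro a b hb hcc
      have hc1 : (im (SimplexCategory.δ b ≫ embHom ι)).card ≤ e + 3 := by
        rw [card_im_comp_emb]
        exact le_trans (card_im_le _) (by simp only [SimplexCategory.len_mk]; omega)
      rw [op_comp, FunctorToTypes.map_comp_apply, fillv_face H hk hj g ι b hb hc1,
        sk_app_map g (SimplexCategory.δ a).op _ hc1
          (le_trans (Finset.card_le_card (im_comp_subset _ _)) hc1)]
      exact g_congr g (Category.assoc _ _ _).symm _ _
    refine eq_of_boundary H (by omega) _ _ ?_
    intro a
    rw [← FunctorToTypes.map_comp_apply, ← op_comp]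
    obtain ⟨a', b', hb', hid⟩ : ∃ (a' : Fin (e+3)) (b' : Fin (e+4)), b' ≠ 1 ∧
        SimplexCategory.δ a ≫ SimplexCategory.δ (1 : Fin (e+4))
          = SimplexCategory.δ a' ≫ SimplexCategory.δ b' := by
      rcases Fin.eq_zero_or_eq_succ a with rfl | ⟨c, rfl⟩
      · refine ⟨0, (0 : Fin (e+3)).castSucc, by simp [Fin.ext_iff], ?_⟩
        rw [show (1 : Fin (e+4)) = (0 : Fin (e+3)).succ by simp]
        exact SimplexCategory.δ_comp_δ_self.symm
      · refine ⟨1, c.succ.succ, fun h => absurd (congrArg Fin.val h) (by rw [Fin.val_succ, Fin.val_succ, Fin.val_one]; omega), ?_⟩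
        rw [show (1 : Fin (e+4)) = ((1 : Fin (e+3)).castSucc) from Fin.ext (by rw [Fin.val_castSucc, Fin.val_one, Fin.val_one])]
        exact (SimplexCategory.δ_comp_δ (by
          simp [Fin.le_def, Fin.val_one])).symm
    have hcard1 : (im ((SimplexCategory.δ a' ≫ SimplexCategory.δ b') ≫ embHom ι)).card
        ≤ e + 3 := by
      rw [card_im_comp_emb]
      exact le_trans (card_im_le _) (by simp only [SimplexCategory.len_mk]; omega)
    have hcard2 : (im (SimplexCategory.δ a ≫ (SimplexCategory.δ (1 : Fin (e+4)) ≫ embHom ι))).card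
        ≤ e + 3 :=
      le_trans (Finset.card_le_card (im_comp_subset _ _)) hc
    calc W.map (SimplexCategory.δ a ≫ SimplexCategory.δ (1 : Fin (e+4))).op (fillv H hk hj g ι)
        = W.map (SimplexCategory.δ a' ≫ SimplexCategory.δ b').op (fillv H hk hj g ι) := by
          rw [hid]
      _ = g.app (op ⦋e+1⦌)
            (inSk (e+2) ((SimplexCategory.δ a' ≫ SimplexCategory.δ b') ≫ embHom ι) hcard1) :=
          face2 a' b' hb' hcard1
      _ = g.app (op ⦋e+1⦌)
            (inSk (e+2) (SimplexCategory.δ a ≫ (SimplexCategory.δ (1 : Fin (e+4)) ≫ embHom ι))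
              hcard2) :=
          g_congr g (by rw [← hid, Category.assoc]) _ _
      _ = W.map (SimplexCategory.δ a).op
            (g.app (op ⦋e+2⦌) (inSk (e+2) (SimplexCategory.δ (1 : Fin (e+4)) ≫ embHom ι) hc)) :=
          (sk_app_map g (SimplexCategory.δ a).op _ hc hcard2).symm
  · exact fillv_face H hk hj g ι t ht hc

end Fill


section Fac

variable {n j : ℕ}

lemma orderEmbOfFin_congr {α : Type*} [LinearOrder α] {T T' : Finset α} (h : T = T') {c : ℕ}
    (hT : T.card = c) (hT' : T'.card = c) : T.orderEmbOfFin hT = T'.orderEmbOfFin hT' := by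
  subst h; rfl

/-- The image order embedding of a morphism whose image has size `j+2`. -/
def facEmb {D : SimplexCategory} (f : D ⟶ ⦋n⦌) (hc : (im f).card = j + 2) :
    Fin (j + 2) ↪o Fin (n + 1) :=
  (im f).orderEmbOfFin hc

/-- The projection onto the image. -/
def facProj {D : SimplexCategory} (f : D ⟶ ⦋n⦌) (hc : (im f).card = j + 2) :
    D ⟶ ⦋j + 1⦌ :=
  SimplexCategory.Hom.mk
    { toFun := fun a => ((im f).orderIsoOfFin hc).symm ⟨f.toOrderHom a,
        Finset.mem_image.mpr ⟨a, Finset.mem_univ _, rfl⟩⟩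
      monotone' := fun a b hab => ((im f).orderIsoOfFin hc).symm.monotone
        (Subtype.mk_le_mk.mpr (f.toOrderHom.monotone hab)) }

lemma fac_spec {D : SimplexCategory} (f : D ⟶ ⦋n⦌) (hc : (im f).card = j + 2) :
    facProj f hc ≫ embHom (facEmb f hc) = f := by
  apply SimplexCategory.Hom.ext
  apply OrderHom.ext
  funext a
  show (im f).orderEmbOfFin hc (((im f).orderIsoOfFin hc).symm
      ⟨f.toOrderHom a, Finset.mem_image.mpr ⟨a, Finset.mem_univ _, rfl⟩⟩) = f.toOrderHom a
  rw [← Finset.coe_orderIsoOfFin_apply, OrderIso.apply_symm_apply]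

lemma fac_unique {D : SimplexCategory} (f : D ⟶ ⦋n⦌) (hc : (im f).card = j + 2)
    (ρ : D ⟶ ⦋j + 1⦌) (hρ : ρ ≫ embHom (facEmb f hc) = f) : ρ = facProj f hc := by
  apply SimplexCategory.Hom.ext
  apply OrderHom.ext
  funext a
  apply ((im f).orderEmbOfFin hc).injective
  have h1 := congrArg (fun q => SimplexCategory.Hom.toOrderHom q a) hρ
  have h2 := congrArg (fun q => SimplexCategory.Hom.toOrderHom q a) (fac_spec f hc)
  simp only [SimplexCategory.comp_toOrderHom, OrderHom.comp_coe, Function.comp_apply] at h1 h2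
  exact h1.trans h2.symm

end Fac

section Extend

variable {k n : ℕ}
variable (H : ∀ (m : ℕ) (i : Fin (m + 1)), 0 < (i : ℕ) → (i : ℕ) < m → k < m →
    Function.Bijective
      (fun φ : (SSet.stdSimplex.{v}.obj ⦋m⦌ ⟶ W) => (SSet.horn m i).ι ≫ φ))
variable {j : ℕ} (hk : 0 < k) (hj : k + 1 ≤ j)
variable (g : simplexSkeleton.{v} j n ⟶ W)

/-- The underlying function of the extension of `g` to the next skeleton. -/
noncomputable def extCore {p : SimplexCategoryᵒᵖ} (f : p.unop ⟶ ⦋n⦌)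
    (hf : (im f).card ≤ j + 2) : W.obj p :=
  if h : (im f).card ≤ j + 1 then g.app p (inSk j f h)
  else W.map (facProj f (le_antisymm hf (by omega))).op
    (fillv H hk hj g (facEmb f (le_antisymm hf (by omega))))

lemma extCore_natural {p q : SimplexCategoryᵒᵖ} (α : p ⟶ q) (f : p.unop ⟶ ⦋n⦌)
    (hf : (im f).card ≤ j + 2) (hf' : (im (α.unop ≫ f)).card ≤ j + 2) :
    extCore H hk hj g (α.unop ≫ f) hf' = W.map α (extCore H hk hj g f hf) := by
  have hmapmap : ∀ (ρ : p.unop ⟶ ⦋j+1⦌) (x : W.obj (op ⦋j+1⦌)),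
      W.map α (W.map ρ.op x) = W.map (α.unop ≫ ρ).op x := by
    intro ρ x
    rw [op_comp, FunctorToTypes.map_comp_apply]
    rfl
  have hvalpos : ∀ (pp : SimplexCategoryᵒᵖ) (f : pp.unop ⟶ ⦋n⦌) (hf : (im f).card ≤ j + 2)
      (h : (im f).card ≤ j + 1), extCore H hk hj g f hf = g.app pp (inSk j f h) := by
    intro pp f hf h
    simp only [extCore]
    rw [dif_pos h]
  have hvalneg : ∀ (pp : SimplexCategoryᵒᵖ) (f : pp.unop ⟶ ⦋n⦌) (hf : (im f).card ≤ j + 2)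
      (hc : (im f).card = j + 2), extCore H hk hj g f hf
        = W.map (facProj f hc).op (fillv H hk hj g (facEmb f hc)) := by
    intro pp f hf hc
    simp only [extCore]
    rw [dif_neg (by omega)]
  by_cases h : (im f).card ≤ j + 1
  · rw [hvalpos q _ hf' (le_trans (Finset.card_le_card (im_comp_subset _ _)) h),
      hvalpos p f hf h]
    exact (sk_app_map g α f h _).symm
  · have hc : (im f).card = j + 2 := le_antisymm hf (by omega)
    rw [hvalneg p f hf hc]
    by_cases h' : (im (α.unop ≫ f)).card ≤ j + 1
    · rw [hvalpos q _ hf' h', hmapmap]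
      have hcomp : (α.unop ≫ facProj f hc) ≫ embHom (facEmb f hc) = α.unop ≫ f := by
        rw [Category.assoc, fac_spec]
      have hns : ¬Function.Surjective ⇑(α.unop ≫ facProj f hc).toOrderHom := by
        intro hs
        have h1 := card_im_comp_emb (facEmb f hc) (α.unop ≫ facProj f hc)
        rw [hcomp] at h1
        have h2 : im (α.unop ≫ facProj f hc) = Finset.univ :=
          Finset.image_univ_of_surjective hs
        rw [h2, Finset.card_univ, Fintype.card_fin] at h1
        omega
      obtain ⟨t, θ, hθ⟩ :=
        SimplexCategory.eq_comp_δ_of_not_surjective (α.unop ≫ facProj f hc) hns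
      have hcδ : (im (SimplexCategory.δ t ≫ embHom (facEmb f hc))).card ≤ j + 1 := by
        rw [card_im_comp_emb]
        exact le_trans (card_im_le _) (by simp only [SimplexCategory.len_mk]; omega)
      have h2 : (im (θ ≫ (SimplexCategory.δ t ≫ embHom (facEmb f hc)))).card ≤ j + 1 :=
        le_trans (Finset.card_le_card (im_comp_subset _ _)) hcδ
      calc g.app q (inSk j (α.unop ≫ f) h')
          = g.app q (inSk j (θ ≫ (SimplexCategory.δ t ≫ embHom (facEmb f hc))) h2) :=
            g_congr g (by rw [← Category.assoc, ← hθ, hcomp]) _ _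
        _ = W.map θ.op (g.app (op ⦋j⦌)
              (inSk j (SimplexCategory.δ t ≫ embHom (facEmb f hc)) hcδ)) :=
            (sk_app_map g θ.op _ hcδ h2).symm
        _ = W.map θ.op (W.map (SimplexCategory.δ t).op (fillv H hk hj g (facEmb f hc))) := by
            rw [fillv_face_all H hk hj g _ t hcδ]
        _ = W.map (θ ≫ SimplexCategory.δ t).op (fillv H hk hj g (facEmb f hc)) := by
            rw [op_comp, FunctorToTypes.map_comp_apply]
        _ = W.map (α.unop ≫ facProj f hc).op (fillv H hk hj g (facEmb f hc)) := by
            rw [← hθ]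
    · have hc' : (im (α.unop ≫ f)).card = j + 2 := le_antisymm hf' (by omega)
      rw [hvalneg q _ hf' hc']
      have him : im (α.unop ≫ f) = im f :=
        Finset.eq_of_subset_of_card_le (im_comp_subset _ _) (by omega)
      have hemb : facEmb (α.unop ≫ f) hc' = facEmb f hc := orderEmbOfFin_congr him _ _
      have hproj : facProj (α.unop ≫ f) hc' = α.unop ≫ facProj f hc :=
        (fac_unique _ _ _ (by rw [hemb, Category.assoc, fac_spec])).symm
      rw [hemb, hproj, hmapmap]

/-- The extension of `g` to the next skeleton. -/
noncomputable def extendHom : simplexSkeleton.{v} (j+1) n ⟶ W where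
  app p := TypeCat.ofHom fun σ => extCore H hk hj g (SSet.stdSimplex.objEquiv σ.1) σ.2
  naturality p q α := by
    ext σ
    exact extCore_natural H hk hj g α (SSet.stdSimplex.objEquiv σ.1) σ.2
      (((simplexSkeleton.{v} (j+1) n).map α σ).2)

lemma extend_restrict :
    skIncl j (j+1) (by omega) ≫ extendHom H hk hj g = g := by
  ext p σ
  show extCore H hk hj g (SSet.stdSimplex.objEquiv σ.1) (σ.2.trans (by omega))
    = g.app p σ
  simp only [extCore]
  rw [dif_pos (show (im (SSet.stdSimplex.objEquiv σ.1)).card ≤ j + 1 from σ.2)]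
  congr 1

end Extend

section Key

variable {k : ℕ}
variable (H : ∀ (m : ℕ) (i : Fin (m + 1)), 0 < (i : ℕ) → (i : ℕ) < m → k < m →
    Function.Bijective
      (fun φ : (SSet.stdSimplex.{v}.obj ⦋m⦌ ⟶ W) => (SSet.horn m i).ι ≫ φ))
variable {n : ℕ}

/-- `Δ⦋n⦌` maps into any skeleton of level `≥ n`. -/
def toSk (n j : ℕ) (h : n ≤ j) :
    SSet.stdSimplex.{v}.obj ⦋n⦌ ⟶ simplexSkeleton.{v} j n where
  app p := TypeCat.ofHom fun σ => ⟨σ, by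
    refine le_trans (Finset.card_le_univ _) ?_
    rw [Fintype.card_fin]; omega⟩
  naturality p q α := rfl

include H in
lemma extend_all (hk : 0 < k) (d : ℕ) (g : simplexSkeleton.{v} (k+1) n ⟶ W) :
    ∃ g' : simplexSkeleton.{v} (k+1+d) n ⟶ W,
      skIncl (k+1) (k+1+d) (by omega) ≫ g' = g := by
  induction d with
  | zero => exact ⟨g, by ext p σ; rfl⟩
  | succ d IH =>
    obtain ⟨g', hg'⟩ := IH
    refine ⟨extendHom H hk (Nat.le_add_right _ _) g', ?_⟩
    rw [show skIncl (n := n) (k+1) (k+1+(d+1)) (by omega)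
        = skIncl (k+1) (k+1+d) (by omega) ≫ skIncl (k+1+d) (k+1+d+1) (by omega) from rfl,
      Category.assoc, extend_restrict, hg']

include H in
theorem key (hk : 0 < k) :
    Function.Bijective (fun φ : (SSet.stdSimplex.{v}.obj ⦋n⦌ ⟶ W) =>
      simplexSkeletonIncl.{v} (k+1) n ≫ φ) := by
  constructor
  · intro φ ψ hsame
    have claim : ∀ m (f : (⦋m⦌ : SimplexCategory) ⟶ ⦋n⦌),
        W.map f.op (tp φ) = W.map f.op (tp ψ) := by
      intro m
      induction m using Nat.strong_induction_on with
      | _ m IH =>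
        intro f
        by_cases hcard : (im f).card ≤ k + 2
        · have h1 : φ.app (op ⦋m⦌) (sx f) = ψ.app (op ⦋m⦌) (sx f) :=
            congrArg (fun ξ : simplexSkeleton.{v} (k+1) n ⟶ W => ξ.app (op ⦋m⦌)
              (⟨sx f, hcard⟩ : (simplexSkeleton.{v} (k+1) n).obj (op ⦋m⦌))) hsame
          calc W.map f.op (tp φ) = φ.app (op ⦋m⦌) (sx f) := (hom_app_sx φ f).symm
            _ = ψ.app (op ⦋m⦌) (sx f) := h1
            _ = W.map f.op (tp ψ) := hom_app_sx ψ f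
        · have hm : k + 2 ≤ m := by
            have h2 := card_im_le f
            simp only [SimplexCategory.len_mk] at h2
            omega
          obtain ⟨e, rfl⟩ : ∃ e, m = e + 2 := ⟨m - 2, by omega⟩
          refine eq_of_boundary H (by omega) _ _ ?_
          intro t
          rw [← FunctorToTypes.map_comp_apply, ← op_comp,
            ← FunctorToTypes.map_comp_apply, ← op_comp]
          exact IH (e+1) (by omega) (SimplexCategory.δ t ≫ f)
    apply hom_ext_tp
    have h3 := claim n (𝟙 (SimplexCategory.mk n))
    rw [op_id, FunctorToTypes.map_id_apply, FunctorToTypes.map_id_apply] at h3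
    exact h3
  · intro g
    obtain ⟨g', hg'⟩ := extend_all H hk n g
    refine ⟨toSk n (k+1+n) (by omega) ≫ g', ?_⟩
    show simplexSkeletonIncl.{v} (k+1) n ≫ toSk n (k+1+n) (by omega) ≫ g' = g
    rw [← Category.assoc,
      show simplexSkeletonIncl.{v} (k+1) n ≫ toSk n (k+1+n) (by omega)
        = skIncl (k+1) (k+1+n) (by omega) from rfl, hg']

end Key

end Coskeletal

/-- A `k`-category is `(k+1)`-coskeletal: restriction along the inclusion of
the `(k+1)`-skeleton, `Xₙ → Map(sk_{k+1}Δⁿ, X)`, is an isomorphism for all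
`n`. -/
theorem kCategory_coskeletal {V : Type u} [Category.{v} V] [HasFiniteLimits V]
    (D : DescentData V) (k : ℕ) (hk : 0 < k) (X : SimplicialObject V)
    (hX : IsKCategory D.cover k X) (n : ℕ) :
    IsIso (restrictMap (simplexSkeletonIncl.{v} (k + 1) n) X) := by
  obtain ⟨-, hiso, -⟩ := hX
  have happ : ∀ A : Vᵒᵖ, IsIso ((restrictMap (simplexSkeletonIncl.{v} (k + 1) n) X).app A) := by
    intro A
    rw [CategoryTheory.isIso_iff_bijective]
    exact key (W := (sHomF X).obj A) (fun m i h1 h2 h3 => by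
      haveI := hiso m i h1 h2 h3
      haveI : IsIso ((restrictMap ((SSet.horn m i).ι) X).app A) := inferInstance
      exact (CategoryTheory.isIso_iff_bijective _).mp this) hk
  exact NatIso.isIso_of_isIso_app _

end Paper
end
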